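/- Let 𝔗 be the affine fan induced by a strongly convex rational polyhedral cone τ, let ν be a ray not contained in τ with Cone(τ, ν) strongly convex and dim Cone(τ, ν) = dim τ + 1, and set 𝔛 = Ext(𝔗, ν). Then for every efficient subdivision 𝔛' of 𝔛 there exists an efficient subdivision 𝔗' of 𝔗 such that 𝔛' = Ext(𝔗', ν). -/

import Mathlib

namespace ToricPaper

open scoped BigOperators

/-- The ambient space `N_ℚ = ℚ^n`. -/
abbrev V (n : ℕ) := Fin n → ℚ

variable {n : ℕ}

/-- The cone of nonnegative rational combinations of elements of `A`. -/
def coneHull (A : Set (V n)) : Set (V n) :=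
  {x | ∃ t : Finset (V n), ↑t ⊆ A ∧ ∃ c : V n → ℚ,
    (∀ v ∈ t, 0 ≤ c v) ∧ x = ∑ v ∈ t, c v • v}

/-- A rational polyhedral cone: the cone generated by finitely many vectors. -/
def IsPolyCone (σ : Set (V n)) : Prop := ∃ S : Finset (V n), σ = coneHull (S : Set (V n))

/-- A cone is strongly convex if it contains no line. -/
def StronglyConvex (σ : Set (V n)) : Prop := ∀ x ∈ σ, -x ∈ σ → x = 0

/-- `F` is a face of `σ`, cut out by a linear functional nonnegative on `σ`. -/
def IsFaceOf (F σ : Set (V n)) : Prop :=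
  ∃ m : (V n) →ₗ[ℚ] ℚ, (∀ x ∈ σ, 0 ≤ m x) ∧ F = {x ∈ σ | m x = 0}

/-- Dimension of a cone: the rank of its linear span. -/
noncomputable def coneDim (σ : Set (V n)) : ℕ := Module.finrank ℚ (Submodule.span ℚ σ)

/-- A ray of a cone is a one-dimensional face. -/
def IsRayOf (ν σ : Set (V n)) : Prop := IsFaceOf ν σ ∧ coneDim ν = 1

/-- An abstract ray: a one-dimensional strongly convex rational polyhedral cone. -/
def IsRay (ν : Set (V n)) : Prop := IsPolyCone ν ∧ StronglyConvex ν ∧ coneDim ν = 1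

/-- All faces of a cone `τ` (the affine fan induced by `τ`). -/
def faces (τ : Set (V n)) : Set (Set (V n)) := {F | IsFaceOf F τ}

/-- The rays of a cone `τ`. -/
def raysOf (τ : Set (V n)) : Set (Set (V n)) := {ν | IsRayOf ν τ}

/-- A fan: a finite collection of strongly convex rational polyhedral cones, closed under
taking faces, such that the intersection of two cones is a face of each. -/
def IsFan (X : Set (Set (V n))) : Prop :=
  X.Finite ∧ (∀ σ ∈ X, IsPolyCone σ ∧ StronglyConvex σ) ∧
  (∀ σ ∈ X, ∀ F, IsFaceOf F σ → F ∈ X) ∧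
  (∀ σ ∈ X, ∀ σ' ∈ X, IsFaceOf (σ ∩ σ') σ ∧ IsFaceOf (σ ∩ σ') σ')

/-- The rays (one-dimensional cones) belonging to a collection of cones. -/
def raysIn (X : Set (Set (V n))) : Set (Set (V n)) := {ν | ν ∈ X ∧ coneDim ν = 1}

/-- The support of a collection of cones. -/
def support (X : Set (Set (V n))) : Set (V n) := ⋃₀ X

/-- The data of a fan quadruple `(X, !B, *C, !*H)`: three pairwise disjoint sets of rays. -/
def IsQuadData (X B C H : Set (Set (V n))) : Prop :=
  B ⊆ raysIn X ∧ C ⊆ raysIn X ∧ H ⊆ raysIn X ∧ Disjoint B C ∧ Disjoint B H ∧ Disjoint C H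

/-- The data of a fan triple `(X, !B, *C)`: two disjoint sets of rays. -/
def IsTripleData (X B C : Set (Set (V n))) : Prop :=
  B ⊆ raysIn X ∧ C ⊆ raysIn X ∧ Disjoint B C

/-- `ρ` is a sorting function for the (restricted) quadruple on the faces of `ξ`:
nonnegative on rays of `ξ` in `B`, nonpositive on rays of `ξ` in `C`, zero on rays of `ξ`
in none of `B`, `C`, `H`. -/
def IsSortingOn (ξ : Set (V n)) (B C H : Set (Set (V n))) (ρ : (V n) →ₗ[ℚ] ℚ) : Prop :=
  (∀ ν, IsRayOf ν ξ → ν ∈ B → ∀ x ∈ ν, 0 ≤ ρ x) ∧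
  (∀ ν, IsRayOf ν ξ → ν ∈ C → ∀ x ∈ ν, ρ x ≤ 0) ∧
  (∀ ν, IsRayOf ν ξ → ν ∉ B → ν ∉ C → ν ∉ H → ∀ x ∈ ν, ρ x = 0)

/-- The (restricted) affine quadruple on the faces of `ξ` admits a `Cf`-strict sorting
function: a sorting function which is moreover negative on `ν ∖ {0}` for every `ν ∈ Cf`. -/
def HasStrictSortingOn (ξ : Set (V n)) (B C H Cf : Set (Set (V n))) : Prop :=
  ∃ ρ : (V n) →ₗ[ℚ] ℚ, IsSortingOn ξ B C H ρ ∧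
    ∀ ν, IsRayOf ν ξ → ν ∈ Cf → ∀ x ∈ ν, x ≠ 0 → ρ x < 0

/-- A cone `ξ` is `E`-unsettled if no ray of `ξ` lies in `E`. -/
def Unsettled (E : Set (Set (V n))) (ξ : Set (V n)) : Prop := ∀ ν, IsRayOf ν ξ → ν ∉ E

/-- The quadruple `(X, !B, *C, !*H)` is `(Bs, Cf, Hs)`-sorted. -/
def SortedOn (X B C H Bs Cf Hs : Set (Set (V n))) : Prop :=
  ∀ ξ ∈ X, Unsettled ((B \ Bs) ∪ (H \ Hs)) ξ → HasStrictSortingOn ξ B C H Cf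

/-- Partially-sorted: `(∅, C, ∅)`-sorted. -/
def PartiallySortedOn (X B C H : Set (Set (V n))) : Prop := SortedOn X B C H ∅ C ∅

/-- Well-sorted: `(B, C, H)`-sorted. -/
def WellSortedOn (X B C H : Set (Set (V n))) : Prop := SortedOn X B C H B C H

/-- A simplicial cone is generated by linearly independent vectors. -/
def IsSimplicialCone (σ : Set (V n)) : Prop :=
  ∃ S : Finset (V n), LinearIndependent ℚ (fun v : S => (v : V n)) ∧
    σ = coneHull (S : Set (V n))

/-- A collection of cones is `E`-simplicial: every cone having a ray of `E` as a face is the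
join of that ray with a cone of the collection of one less dimension. -/
def ESimplicialOn (X E : Set (Set (V n))) : Prop :=
  ∀ ν ∈ E, ∀ σ ∈ X, IsFaceOf ν σ →
    ∃ ζ ∈ X, σ = coneHull (ζ ∪ ν) ∧ coneDim σ = coneDim ζ + 1

/-- A subdivision of a fan: a fan with the same support, every cone of which is contained in
a cone of the base. -/
def IsSubdivision (X' X : Set (Set (V n))) : Prop :=
  IsFan X' ∧ support X' = support X ∧ ∀ σ' ∈ X', ∃ σ ∈ X, σ' ⊆ σ

/-- A subdivision is efficient if it introduces no new rays. -/
def IsEfficient (X' X : Set (Set (V n))) : Prop := raysIn X' = raysIn X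

/-- `ψ` is a good (convex piecewise-linear) function for the subdivision `X'` relative to the
cones of the base fan `X`: on each cone `τ` of `X`, `ψ` is convex, linear on each cone of
`X'` contained in `τ`, and the maximal subcones of linearity of `ψ` inside `τ` are exactly
the cones of `X'` (i.e. any convex subset of `τ` on which `ψ` is linear lies in one of them). -/
def IsGoodFor (X X' : Set (Set (V n))) (ψ : V n → ℚ) : Prop :=
  ∀ τ ∈ X, ConvexOn ℚ τ ψ ∧
    (∀ σ' ∈ X', σ' ⊆ τ → ∃ m : (V n) →ₗ[ℚ] ℚ, ∀ x ∈ σ', ψ x = m x) ∧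
    (∀ (m : (V n) →ₗ[ℚ] ℚ) (t : Set (V n)), t ⊆ τ → Convex ℚ t →
      (∀ x ∈ t, ψ x = m x) → ∃ σ' ∈ X', σ' ⊆ τ ∧ t ⊆ σ')

/-- Sign conditions of a good sorting function with respect to the quadruple data on `X'`. -/
def SignedOn (X' B' C' H' : Set (Set (V n))) (ψ : V n → ℚ) : Prop :=
  (∀ ν ∈ B', ∀ x ∈ ν, 0 ≤ ψ x) ∧ (∀ ν ∈ C', ∀ x ∈ ν, ψ x ≤ 0) ∧
  (∀ ν ∈ raysIn X', ν ∉ B' → ν ∉ C' → ν ∉ H' → ∀ x ∈ ν, ψ x = 0)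

/-- Sign conditions restricted to the rays contained in a cone `τ`. -/
def SignedOnIn (τ : Set (V n)) (X' B' C' H' : Set (Set (V n))) (ψ : V n → ℚ) : Prop :=
  (∀ ν ∈ B', ν ⊆ τ → ∀ x ∈ ν, 0 ≤ ψ x) ∧ (∀ ν ∈ C', ν ⊆ τ → ∀ x ∈ ν, ψ x ≤ 0) ∧
  (∀ ν ∈ raysIn X', ν ⊆ τ → ν ∉ B' → ν ∉ C' → ν ∉ H' → ∀ x ∈ ν, ψ x = 0)

/-- A convex subdivision, with respect to a fan quadruple structure on `X'`. -/
def IsConvexSubdiv (X' X B' C' H' : Set (Set (V n))) : Prop :=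
  IsSubdivision X' X ∧ ∃ ψ : V n → ℚ, IsGoodFor X X' ψ ∧ SignedOn X' B' C' H' ψ

/-- A locally-convex subdivision: for each cone of the base there is a good sorting function
on that cone. -/
def IsLocallyConvexSubdiv (X' X B' C' H' : Set (Set (V n))) : Prop :=
  IsSubdivision X' X ∧
    ∀ τ ∈ X, ∃ ψ : V n → ℚ, IsGoodFor {τ} X' ψ ∧ SignedOnIn τ X' B' C' H' ψ

/-- Star subdivision of `X` at a ray `ν` contained in the support of `X`. -/
def starSubdiv (X : Set (Set (V n))) (ν : Set (V n)) : Set (Set (V n)) :=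
  {σ | σ ∈ X ∧ ¬ ν ⊆ σ} ∪
  {τ | ∃ σ ∈ X, ν ⊆ σ ∧ ∃ ξ, IsFaceOf ξ σ ∧ ¬ ν ⊆ ξ ∧ τ = coneHull (ξ ∪ ν)}

/-- The set `S` of facets used in the extension construction `Ext(𝔗, ν)`. -/
noncomputable def extS (τ ν : Set (V n)) : Set (Set (V n)) :=
  if coneDim (coneHull (τ ∪ ν)) = coneDim τ + 1 then {τ}
  else {ζ | (IsFaceOf ζ τ ∧ coneDim ζ + 1 = coneDim τ) ∧
    ∃ m : (V n) →ₗ[ℚ] ℚ, (∀ x ∈ ζ, m x = 0) ∧ (∃ v ∈ ν, v ≠ 0 ∧ m v = -1) ∧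
      ∀ x ∈ τ, x ∉ ζ → 0 < m x}

/-- All faces of cones of `extS τ ν`. -/
noncomputable def extFaces (τ ν : Set (V n)) : Set (Set (V n)) :=
  {ξ | ∃ ζ ∈ extS τ ν, IsFaceOf ξ ζ}

/-- The extension `Ext(𝔗, ν)` of the affine fan of `τ` by the ray `ν`. -/
noncomputable def Ext (τ ν : Set (V n)) : Set (Set (V n)) :=
  {ν} ∪ faces τ ∪ (fun ξ => coneHull (ξ ∪ ν)) '' extFaces τ ν

/-- The extension `Ext(𝔗', ν)` of a subdivision `𝒯'` of the affine fan of `τ` by the ray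
`ν`. -/
noncomputable def ExtSub (T' : Set (Set (V n))) (τ ν : Set (V n)) : Set (Set (V n)) :=
  {ν} ∪ T' ∪ (fun ξ => coneHull (ξ ∪ ν)) ''
    {ξ | ∃ ζ' ∈ T', (∃ ζ ∈ extS τ ν, ζ' ⊆ ζ) ∧ IsFaceOf ξ ζ'}

/-- Sequential convexity of a sequence of star subdivisions (the list gives the rays in the
order in which the star subdivisions are performed). -/
def SeqConvex (B C H : Set (Set (V n))) : Set (Set (V n)) → List (Set (V n)) → Prop
  | _, [] => True
  | X, ν :: rest =>
      IsLocallyConvexSubdiv (starSubdiv X ν) X B C H ∧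
      SeqConvex B C H (starSubdiv X ν) rest

section Aux

/-! ### basics -/

def IsConeSet (C : Set (V n)) : Prop :=
  0 ∈ C ∧ (∀ x ∈ C, ∀ y ∈ C, x + y ∈ C) ∧ ∀ (c : ℚ), 0 ≤ c → ∀ x ∈ C, c • x ∈ C

lemma subset_coneHull (A : Set (V n)) : A ⊆ coneHull A := by
  intro x hx
  exact ⟨{x}, by simpa using hx, fun _ => 1, by simp, by simp⟩

lemma zero_mem_coneHull (A : Set (V n)) : (0 : V n) ∈ coneHull A :=
  ⟨∅, by simp, fun _ => 0, by simp, by simp⟩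

lemma coneHull_mono {A B : Set (V n)} (h : A ⊆ B) : coneHull A ⊆ coneHull B := by
  rintro x ⟨t, ht, c, hc, rfl⟩
  exact ⟨t, ht.trans h, c, hc, rfl⟩

lemma coneHull_min {A C : Set (V n)} (hAC : A ⊆ C) (hC : IsConeSet C) : coneHull A ⊆ C := by
  rintro x ⟨t, ht, c, hc, rfl⟩
  refine Finset.sum_induction _ (· ∈ C) (fun a b ha hb => hC.2.1 a ha b hb) hC.1 ?_
  intro v hv
  exact hC.2.2 (c v) (hc v hv) v (hAC (ht hv))

lemma isConeSet_coneHull (A : Set (V n)) : IsConeSet (coneHull A) := by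
  refine ⟨zero_mem_coneHull A, ?_, ?_⟩
  · rintro x ⟨t₁, ht₁, c₁, hc₁, rfl⟩ y ⟨t₂, ht₂, c₂, hc₂, rfl⟩
    classical
    refine ⟨t₁ ∪ t₂, by simp [Finset.coe_union, Set.union_subset ht₁ ht₂],
      fun v => (if v ∈ t₁ then c₁ v else 0) + (if v ∈ t₂ then c₂ v else 0), ?_, ?_⟩
    · intro v _
      have h1 : (0:ℚ) ≤ (if v ∈ t₁ then c₁ v else 0) := by
        split <;> first | exact hc₁ _ ‹_› | rfl
      have h2 : (0:ℚ) ≤ (if v ∈ t₂ then c₂ v else 0) := by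
        split <;> first | exact hc₂ _ ‹_› | rfl
      exact add_nonneg h1 h2
    · rw [Finset.sum_congr rfl (fun v _ => add_smul (if v ∈ t₁ then c₁ v else 0)
        (if v ∈ t₂ then c₂ v else 0) v), Finset.sum_add_distrib]
      have e1 : ∀ (t : Finset (V n)) (c : V n → ℚ), ∀ v ∈ t₁ ∪ t₂,
          (if v ∈ t then c v else 0) • v = (if v ∈ t then c v • v else 0) := by
        intro t c v _; split <;> simp
      rw [Finset.sum_congr rfl (e1 t₁ c₁), Finset.sum_congr rfl (e1 t₂ c₂),
        Finset.sum_ite_mem, Finset.sum_ite_mem, Finset.union_inter_cancel_left,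
        Finset.union_inter_cancel_right]
  · rintro c hc x ⟨t, ht, cf, hcf, rfl⟩
    refine ⟨t, ht, fun v => c * cf v, fun v hv => mul_nonneg hc (hcf v hv), ?_⟩
    rw [Finset.smul_sum]
    exact Finset.sum_congr rfl fun v _ => (smul_smul c (cf v) v)



lemma coneHull_eq_self {C : Set (V n)} (hC : IsConeSet C) : coneHull C = C :=
  Set.Subset.antisymm (coneHull_min (le_refl C) hC) (subset_coneHull C)

lemma isConeSet_inter {C D : Set (V n)} (hC : IsConeSet C) (hD : IsConeSet D) :
    IsConeSet (C ∩ D) :=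
  ⟨⟨hC.1, hD.1⟩, fun x hx y hy => ⟨hC.2.1 x hx.1 y hy.1, hD.2.1 x hx.2 y hy.2⟩,
    fun c hc x hx => ⟨hC.2.2 c hc x hx.1, hD.2.2 c hc x hx.2⟩⟩

lemma isConeSet_setAdd {C D : Set (V n)} (hC : IsConeSet C) (hD : IsConeSet D) :
    IsConeSet {z | ∃ y ∈ C, ∃ w ∈ D, z = y + w} := by
  refine ⟨⟨0, hC.1, 0, hD.1, by simp⟩, ?_, ?_⟩
  · rintro x ⟨y₁, hy₁, w₁, hw₁, rfl⟩ x' ⟨y₂, hy₂, w₂, hw₂, rfl⟩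
    exact ⟨y₁ + y₂, hC.2.1 _ hy₁ _ hy₂, w₁ + w₂, hD.2.1 _ hw₁ _ hw₂, by abel⟩
  · rintro c hc x ⟨y, hy, w, hw, rfl⟩
    exact ⟨c • y, hC.2.2 c hc y hy, c • w, hD.2.2 c hc w hw, by rw [smul_add]⟩

lemma coneHull_union (A B : Set (V n)) :
    coneHull (A ∪ B) = {z | ∃ y ∈ coneHull A, ∃ w ∈ coneHull B, z = y + w} := by
  apply Set.Subset.antisymm
  · refine coneHull_min ?_ (isConeSet_setAdd (isConeSet_coneHull A) (isConeSet_coneHull B))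
    rintro x (hx | hx)
    · exact ⟨x, subset_coneHull A hx, 0, zero_mem_coneHull B, by simp⟩
    · exact ⟨0, zero_mem_coneHull A, x, subset_coneHull B hx, by simp⟩
  · rintro z ⟨y, hy, w, hw, rfl⟩
    exact (isConeSet_coneHull (A ∪ B)).2.1 _
      (coneHull_mono Set.subset_union_left hy) _
      (coneHull_mono Set.subset_union_right hw)

lemma isConeSet_submodule (p : Submodule ℚ (V n)) : IsConeSet (p : Set (V n)) :=
  ⟨p.zero_mem, fun x hx y hy => p.add_mem hx hy, fun c _ x hx => p.smul_mem c hx⟩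

lemma coneHull_subset_span (A : Set (V n)) : coneHull A ⊆ Submodule.span ℚ A :=
  coneHull_min Submodule.subset_span (isConeSet_submodule _)

lemma span_coneHull (A : Set (V n)) :
    Submodule.span ℚ (coneHull A) = Submodule.span ℚ A := by
  apply le_antisymm
  · rw [Submodule.span_le]; exact coneHull_subset_span A
  · exact Submodule.span_mono (subset_coneHull A)

lemma isConeSet_ker (m : (V n) →ₗ[ℚ] ℚ) : IsConeSet {x | m x = 0} := by
  refine ⟨by simp, fun x hx y hy => by simp [map_add, hx.out, hy.out], fun c _ x hx => by
    simp [map_smul, hx.out]⟩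

def rayset (v : V n) : Set (V n) := {x | ∃ c : ℚ, 0 ≤ c ∧ x = c • v}

lemma isConeSet_rayset (v : V n) : IsConeSet (rayset v) := by
  refine ⟨⟨0, le_refl 0, by simp⟩, ?_, ?_⟩
  · rintro x ⟨c, hc, rfl⟩ y ⟨d, hd, rfl⟩
    exact ⟨c + d, by linarith, by rw [add_smul]⟩
  · rintro c hc x ⟨d, hd, rfl⟩
    exact ⟨c * d, mul_nonneg hc hd, by rw [smul_smul]⟩

lemma mem_rayset_self (v : V n) : v ∈ rayset v := ⟨1, by norm_num, by simp⟩



/-! ### Weyl: every finitely generated cone is a finite intersection of halfspaces -/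

lemma coneHull_insert (u : V n) (A : Set (V n)) :
    coneHull (insert u A) =
      {z | ∃ y ∈ coneHull A, ∃ t : ℚ, 0 ≤ t ∧ z = y + t • u} := by
  have h1 : insert u A = A ∪ {u} := by
    ext x; simp [or_comm]
  rw [h1, coneHull_union]
  have h2 : coneHull {u} = rayset u := by
    apply Set.Subset.antisymm
    · exact coneHull_min (Set.singleton_subset_iff.mpr (mem_rayset_self u)) (isConeSet_rayset u)
    · rintro x ⟨c, hc, rfl⟩
      exact (isConeSet_coneHull _).2.2 c hc u (subset_coneHull _ rfl)
  rw [h2]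
  ext z
  constructor
  · rintro ⟨y, hy, w, ⟨t, ht, rfl⟩, rfl⟩
    exact ⟨y, hy, t, ht, rfl⟩
  · rintro ⟨y, hy, t, ht, rfl⟩
    exact ⟨y, hy, t • u, ⟨t, ht, rfl⟩, rfl⟩

lemma lin_apply_add_smul (ℓ : (V n) →ₗ[ℚ] ℚ) (p q : V n) (t : ℚ) :
    ℓ (p + t • q) = ℓ p + t * ℓ q := by
  rw [map_add, map_smul, smul_eq_mul]

theorem weyl (S : Finset (V n)) :
    ∃ L : Finset ((V n) →ₗ[ℚ] ℚ), coneHull (S : Set (V n)) = {x | ∀ ℓ ∈ L, 0 ≤ ℓ x} := by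
  classical
  induction S using Finset.induction_on with
  | empty =>
    refine ⟨(Finset.univ.image fun i : Fin n => (LinearMap.proj i : (V n) →ₗ[ℚ] ℚ)) ∪
      (Finset.univ.image fun i : Fin n => -(LinearMap.proj i : (V n) →ₗ[ℚ] ℚ)), ?_⟩
    have h0 : coneHull ((∅ : Finset (V n)) : Set (V n)) = {0} := by
      apply Set.Subset.antisymm
      · refine coneHull_min ?_ ?_
        · simp
        · refine ⟨rfl, fun x hx y hy => ?_, fun c _ x hx => ?_⟩
          · rw [Set.mem_singleton_iff] at *; simp [hx, hy]
          · rw [Set.mem_singleton_iff] at *; simp [hx]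
      · rintro x rfl; exact zero_mem_coneHull _
    rw [h0]
    ext x
    simp only [Set.mem_singleton_iff, Set.mem_setOf_eq, Finset.mem_union, Finset.mem_image,
      Finset.mem_univ, true_and]
    constructor
    · rintro rfl ℓ h
      rcases h with ⟨i, rfl⟩ | ⟨i, rfl⟩ <;> simp
    · intro h
      funext i
      have h1 := h (LinearMap.proj i) (Or.inl ⟨i, rfl⟩)
      have h2 := h (-(LinearMap.proj i)) (Or.inr ⟨i, rfl⟩)
      simp only [LinearMap.proj_apply, LinearMap.neg_apply] at h1 h2
      have : x i = 0 := le_antisymm (by linarith) h1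
      simpa using this
  | @insert u S hu ih =>
    obtain ⟨L, hL⟩ := ih
    set Lkeep := L.filter (fun ℓ => 0 ≤ ℓ u) with hLkeep
    set Lcomb := ((L ×ˢ L).filter (fun p => 0 < p.1 u ∧ p.2 u < 0)).image
      (fun p => (p.1 u) • p.2 - (p.2 u) • p.1) with hLcomb
    refine ⟨Lkeep ∪ Lcomb, ?_⟩
    have hmem : ∀ z : V n, z ∈ coneHull (↑(insert u S) : Set (V n)) ↔
        ∃ t : ℚ, 0 ≤ t ∧ ∀ ℓ ∈ L, 0 ≤ ℓ (z - t • u) := by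
      intro z
      rw [Finset.coe_insert, coneHull_insert]
      constructor
      · rintro ⟨y, hy, t, ht, rfl⟩
        refine ⟨t, ht, fun ℓ hℓ => ?_⟩
        have : y + t • u - t • u = y := by abel
        rw [this]
        rw [hL] at hy
        exact hy ℓ hℓ
      · rintro ⟨t, ht, h⟩
        refine ⟨z - t • u, ?_, t, ht, by abel⟩
        rw [hL]; exact h
    ext z
    rw [hmem z]
    simp only [Set.mem_setOf_eq]
    constructor
    · -- forward: decomposition implies inequalities
      rintro ⟨t, ht, hy⟩ ℓ' hℓ'
      rcases Finset.mem_union.mp hℓ' with hk | hc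
      · rw [hLkeep, Finset.mem_filter] at hk
        have h1 := hy ℓ' hk.1
        have h2 : ℓ' z = ℓ' (z - t • u) + t * ℓ' u := by
          rw [map_sub, map_smul, smul_eq_mul]; ring
        rw [h2]
        have := mul_nonneg ht hk.2
        linarith
      · rw [hLcomb, Finset.mem_image] at hc
        obtain ⟨⟨ℓ₁, ℓ₂⟩, hp, rfl⟩ := hc
        rw [Finset.mem_filter, Finset.mem_product] at hp
        obtain ⟨⟨h₁L, h₂L⟩, h₁u, h₂u⟩ := hp
        have k1 := hy ℓ₁ h₁L
        have k2 := hy ℓ₂ h₂L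
        simp only [LinearMap.sub_apply, LinearMap.smul_apply, smul_eq_mul]
        have e1 : ℓ₁ z = ℓ₁ (z - t • u) + t * ℓ₁ u := by
          rw [map_sub, map_smul, smul_eq_mul]; ring
        have e2 : ℓ₂ z = ℓ₂ (z - t • u) + t * ℓ₂ u := by
          rw [map_sub, map_smul, smul_eq_mul]; ring
        rw [e1, e2]
        have : ℓ₁ u * ℓ₂ (z - t • u) - ℓ₂ u * ℓ₁ (z - t • u) ≥ 0 := by
          have := mul_nonneg (le_of_lt h₁u) k2
          have := mul_nonneg (le_of_lt (neg_pos.mpr h₂u)) k1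
          nlinarith
        nlinarith
    · -- backward: construct t
      intro hz
      have hkeep : ∀ ℓ ∈ L, 0 ≤ ℓ u → 0 ≤ ℓ z := by
        intro ℓ hℓ hℓu
        exact hz ℓ (Finset.mem_union.mpr (Or.inl (Finset.mem_filter.mpr ⟨hℓ, hℓu⟩)))
      set LN := L.filter (fun ℓ => ℓ u < 0) with hLN
      set E : Finset ℚ := insert 0 (LN.image fun ℓ => ℓ z / ℓ u) with hE
      have hEne : E.Nonempty := ⟨0, Finset.mem_insert_self _ _⟩
      set t := E.max' hEne with htdef
      have ht0 : 0 ≤ t := Finset.le_max' E 0 (Finset.mem_insert_self _ _)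
      refine ⟨t, ht0, fun ℓ hℓ => ?_⟩
      rw [map_sub, map_smul, smul_eq_mul]
      rcases lt_trichotomy (ℓ u) 0 with hneg | hzero | hpos
      · -- ℓ u < 0 : need t ≥ ℓz/ℓu
        have hmem : ℓ z / ℓ u ∈ E := Finset.mem_insert_of_mem
          (Finset.mem_image_of_mem _ (Finset.mem_filter.mpr ⟨hℓ, hneg⟩))
        have hle : ℓ z / ℓ u ≤ t := Finset.le_max' E _ hmem
        have : t * ℓ u ≤ (ℓ z / ℓ u) * ℓ u :=
          mul_le_mul_of_nonpos_right hle (le_of_lt hneg)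
        rw [div_mul_cancel₀ _ (ne_of_lt hneg)] at this
        linarith
      · rw [hzero]
        have := hkeep ℓ hℓ (le_of_eq hzero.symm)
        linarith
      · -- ℓ u > 0 : need t ≤ ℓz/ℓu
        have hle : t ≤ ℓ z / ℓ u := by
          have hcases := Finset.max'_mem E hEne
          rw [← htdef] at hcases
          rcases Finset.mem_insert.mp hcases with h0 | himg
          · rw [h0]
            exact div_nonneg (hkeep ℓ hℓ (le_of_lt hpos)) (le_of_lt hpos)
          · obtain ⟨ℓ₀, hℓ₀, ht0'⟩ := Finset.mem_image.mp himg
            rw [Finset.mem_filter] at hℓ₀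
            obtain ⟨hℓ₀L, hℓ₀u⟩ := hℓ₀
            -- combo functional for (ℓ, ℓ₀)
            have hcombo : ((ℓ u) • ℓ₀ - (ℓ₀ u) • ℓ) ∈ Lcomb := by
              rw [hLcomb, Finset.mem_image]
              exact ⟨(ℓ, ℓ₀), Finset.mem_filter.mpr
                ⟨Finset.mem_product.mpr ⟨hℓ, hℓ₀L⟩, hpos, hℓ₀u⟩, rfl⟩
            have hval := hz _ (Finset.mem_union.mpr (Or.inr hcombo))
            simp only [LinearMap.sub_apply, LinearMap.smul_apply, smul_eq_mul] at hval
            -- hval : 0 ≤ ℓ u * ℓ₀ z - ℓ₀ u * ℓ z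
            have hne : ℓ₀ z / ℓ₀ u = (-(ℓ₀ z)) / (-(ℓ₀ u)) := by rw [neg_div_neg_eq]
            rw [← ht0', hne, div_le_div_iff₀ (neg_pos.mpr hℓ₀u) hpos]
            linarith

        have := mul_le_mul_of_nonneg_right hle (le_of_lt hpos)
        rw [div_mul_cancel₀ _ (ne_of_gt hpos)] at this
        linarith



/-! ### parameter intervals in halfspace cones -/

lemma exists_max_param (L : Finset ((V n) →ₗ[ℚ] ℚ)) (p q : V n)
    (hq : ¬ (∀ ℓ ∈ L, 0 ≤ ℓ q)) (t₁ : ℚ) (ht₁ : ∀ ℓ ∈ L, 0 ≤ ℓ (p + t₁ • q)) :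
    ∃ tm, t₁ ≤ tm ∧ (∀ ℓ ∈ L, 0 ≤ ℓ (p + tm • q)) ∧
      (∀ t : ℚ, (∀ ℓ ∈ L, 0 ≤ ℓ (p + t • q)) → t ≤ tm) ∧
      ∃ ℓ₀ ∈ L, ℓ₀ q < 0 ∧ ℓ₀ (p + tm • q) = 0 := by
  classical
  push_neg at hq
  obtain ⟨ℓ₁, hℓ₁L, hℓ₁q⟩ := hq
  have hℓ₁q' : ℓ₁ q < 0 := hℓ₁q
  set LN := L.filter (fun ℓ => ℓ q < 0) with hLN
  have hLNne : LN.Nonempty := ⟨ℓ₁, Finset.mem_filter.mpr ⟨hℓ₁L, hℓ₁q'⟩⟩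
  set E := LN.image (fun ℓ => -(ℓ p) / ℓ q) with hEdef
  have hEne : E.Nonempty := hLNne.image _
  set tm := E.min' hEne with htm
  -- generic: for t and ℓ with ℓ q < 0 : 0 ≤ ℓ (p + t•q) ↔ t ≤ -(ℓ p)/ℓ q
  have key : ∀ (t : ℚ) (ℓ : (V n) →ₗ[ℚ] ℚ), ℓ q < 0 →
      ((0 : ℚ) ≤ ℓ (p + t • q) ↔ t ≤ -(ℓ p) / ℓ q) := by
    intro t ℓ hneg
    rw [lin_apply_add_smul]
    constructor
    · intro h
      have hne : -(ℓ p) / ℓ q = ℓ p / (-(ℓ q)) := by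
        rw [div_neg, neg_div]
      rw [hne, le_div_iff₀ (neg_pos.mpr hneg)]
      nlinarith
    · intro h
      have := mul_le_mul_of_nonpos_right h (le_of_lt hneg)
      rw [div_mul_cancel₀ _ (ne_of_lt hneg)] at this
      linarith
  have hub : ∀ t : ℚ, (∀ ℓ ∈ L, 0 ≤ ℓ (p + t • q)) → t ≤ tm := by
    intro t ht
    apply Finset.le_min'
    intro y hy
    obtain ⟨ℓ, hℓ, rfl⟩ := Finset.mem_image.mp hy
    have hℓ' := Finset.mem_filter.mp hℓ
    exact (key t ℓ hℓ'.2).mp (ht ℓ hℓ'.1)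
  have ht₁tm : t₁ ≤ tm := hub t₁ ht₁
  have hin : ∀ ℓ ∈ L, 0 ≤ ℓ (p + tm • q) := by
    intro ℓ hℓ
    rcases lt_trichotomy (ℓ q) 0 with hneg | hzero | hpos
    · rw [key tm ℓ hneg]
      exact Finset.min'_le E _ (Finset.mem_image_of_mem _ (Finset.mem_filter.mpr ⟨hℓ, hneg⟩))
    · rw [lin_apply_add_smul, hzero, mul_zero, add_zero]
      have := ht₁ ℓ hℓ
      rw [lin_apply_add_smul, hzero, mul_zero, add_zero] at this
      exact this
    · rw [lin_apply_add_smul]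
      have h1 := ht₁ ℓ hℓ
      rw [lin_apply_add_smul] at h1
      nlinarith [mul_le_mul_of_nonneg_right ht₁tm (le_of_lt hpos)]
  refine ⟨tm, ht₁tm, hin, hub, ?_⟩
  have := Finset.min'_mem E hEne
  rw [← htm] at this
  obtain ⟨ℓ₀, hℓ₀, heq⟩ := Finset.mem_image.mp this
  have hℓ₀' := Finset.mem_filter.mp hℓ₀
  refine ⟨ℓ₀, hℓ₀'.1, hℓ₀'.2, ?_⟩
  rw [lin_apply_add_smul, ← heq, div_mul_cancel₀ _ (ne_of_lt hℓ₀'.2)]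
  ring




/-! ### face lemmas -/

lemma isFaceOf_refl (σ : Set (V n)) : IsFaceOf σ σ := by
  refine ⟨0, by simp, ?_⟩
  ext x; simp

lemma IsFaceOf.subset {F σ : Set (V n)} (h : IsFaceOf F σ) : F ⊆ σ := by
  obtain ⟨m, _, rfl⟩ := h
  intro x hx; exact hx.1

lemma isConeSet_of_poly {σ : Set (V n)} (h : IsPolyCone σ) : IsConeSet σ := by
  obtain ⟨S, rfl⟩ := h
  exact isConeSet_coneHull _

lemma IsFaceOf.coneSet {F σ : Set (V n)} (h : IsFaceOf F σ) (hσ : IsConeSet σ) :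
    IsConeSet F := by
  obtain ⟨m, hm, rfl⟩ := h
  have : {x ∈ σ | m x = 0} = σ ∩ {x | m x = 0} := rfl
  rw [this]
  exact isConeSet_inter hσ (isConeSet_ker m)

/-- A face of `coneHull S` is the cone hull of the generators lying on it. -/
lemma face_generators {S : Finset (V n)} {F : Set (V n)}
    (h : IsFaceOf F (coneHull (S : Set (V n)))) :
    ∃ S' : Finset (V n), S' ⊆ S ∧ F = coneHull (S' : Set (V n)) := by
  classical
  obtain ⟨m, hm, hF⟩ := h
  refine ⟨S.filter (fun s => m s = 0), Finset.filter_subset _ _, ?_⟩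
  apply Set.Subset.antisymm
  · rintro x hx
    rw [hF] at hx
    obtain ⟨⟨t, ht, c, hc, rfl⟩, hmx⟩ := hx
    have hterm : ∀ v ∈ t, (0:ℚ) ≤ c v * m v := by
      intro v hv
      exact mul_nonneg (hc v hv) (hm v (subset_coneHull _ (ht hv)))
    have hsum : ∑ v ∈ t, c v * m v = 0 := by
      have : m (∑ v ∈ t, c v • v) = ∑ v ∈ t, c v * m v := by
        rw [map_sum]; exact Finset.sum_congr rfl fun v _ => by rw [map_smul, smul_eq_mul]
      rw [← this, hmx]
    have hzero := (Finset.sum_eq_zero_iff_of_nonneg hterm).mp hsum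
    refine ⟨t.filter (fun v => c v ≠ 0), ?_, c, fun v hv => hc v (Finset.mem_filter.mp hv).1, ?_⟩
    · intro v hv
      rw [Finset.coe_filter] at hv
      obtain ⟨hvt, hcv⟩ := hv
      have hvS : v ∈ S := ht hvt
      have hcvpos : 0 < c v := lt_of_le_of_ne (hc v hvt) (Ne.symm hcv)
      have : m v = 0 := by
        have := hzero v hvt
        rcases mul_eq_zero.mp this with h | h
        · exact absurd h hcv
        · exact h
      simp only [Finset.coe_filter, Set.mem_setOf_eq]
      exact ⟨hvS, this⟩
    · refine (Finset.sum_subset (Finset.filter_subset _ t) ?_).symm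
      intro x hxt hxf
      have : c x = 0 := by
        by_contra hne
        exact hxf (Finset.mem_filter.mpr ⟨hxt, hne⟩)
      rw [this, zero_smul]
  · refine coneHull_min ?_ (IsFaceOf.coneSet ⟨m, hm, hF⟩ (isConeSet_coneHull _))
    intro s hs
    rw [Finset.coe_filter] at hs
    obtain ⟨hsS, hms⟩ := hs
    rw [hF]
    exact ⟨subset_coneHull _ hsS, hms⟩

/-- Transitivity of faces over a finitely generated cone. -/
lemma isFaceOf_trans {S : Finset (V n)} {F G : Set (V n)}
    (hF : IsFaceOf F (coneHull (S : Set (V n)))) (hG : IsFaceOf G F) :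
    IsFaceOf G (coneHull (S : Set (V n))) := by
  classical
  set σ := coneHull (S : Set (V n)) with hσdef
  obtain ⟨ℓ, hℓ, hFeq⟩ := hF
  obtain ⟨ℓ₂, hℓ₂, hGeq⟩ := hG
  -- choose N big enough
  set P := S.filter (fun s => 0 < ℓ s) with hP
  set E := insert (0:ℚ) (P.image fun s => -(ℓ₂ s) / ℓ s) with hE
  have hEne : E.Nonempty := ⟨0, Finset.mem_insert_self _ _⟩
  set N := E.max' hEne + 1 with hN
  have hNbig : ∀ s ∈ S, 0 < ℓ s → 0 < ℓ₂ s + N * ℓ s := by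
    intro s hs hls
    have hmem : -(ℓ₂ s) / ℓ s ∈ E := Finset.mem_insert_of_mem
      (Finset.mem_image_of_mem _ (Finset.mem_filter.mpr ⟨hs, hls⟩))
    have h1 : -(ℓ₂ s) / ℓ s ≤ E.max' hEne := Finset.le_max' E _ hmem
    have h2 : -(ℓ₂ s) / ℓ s < N := by rw [hN]; linarith
    have := (div_lt_iff₀ hls).mp h2
    linarith
  set ℓ' := ℓ₂ + N • ℓ with hℓ'
  have happ : ∀ x, ℓ' x = ℓ₂ x + N * ℓ x := by
    intro x; rw [hℓ']; simp [smul_eq_mul]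
  have hgen : ∀ s ∈ S, 0 ≤ ℓ' s := by
    intro s hs
    rcases lt_trichotomy (ℓ s) 0 with hneg | hzero | hpos
    · exact absurd (hℓ s (subset_coneHull _ hs)) (not_le.mpr hneg)
    · have hsF : s ∈ F := by
        rw [hFeq]; exact ⟨subset_coneHull _ hs, hzero⟩
      rw [happ, hzero, mul_zero, add_zero]
      exact hℓ₂ s hsF
    · exact le_of_lt (by rw [happ]; exact hNbig s hs hpos)
  refine ⟨ℓ', ?_, ?_⟩
  · intro x hx
    obtain ⟨t, ht, c, hc, rfl⟩ := hx
    have : ℓ' (∑ v ∈ t, c v • v) = ∑ v ∈ t, c v * ℓ' v := by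
      rw [map_sum]; exact Finset.sum_congr rfl fun v _ => by rw [map_smul, smul_eq_mul]
    rw [this]
    exact Finset.sum_nonneg fun v hv => mul_nonneg (hc v hv) (hgen v (ht hv))
  · apply Set.Subset.antisymm
    · intro x hx
      have hxF : x ∈ F := hGeq ▸ hx |>.1
      have hxσ : x ∈ σ := (hFeq ▸ hxF).1
      have hxℓ : ℓ x = 0 := (hFeq ▸ hxF).2
      have hxℓ₂ : ℓ₂ x = 0 := (hGeq ▸ hx).2
      exact ⟨hxσ, by rw [happ, hxℓ, hxℓ₂]; ring⟩
    · rintro x ⟨hxσ, hxℓ'⟩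
      -- first show ℓ x = 0
      have hxℓ : ℓ x = 0 := by
        by_contra hne
        have hpos : 0 < ℓ x := lt_of_le_of_ne (hℓ x hxσ) (Ne.symm hne)
        obtain ⟨t, ht, c, hc, hxeq⟩ := hxσ
        have hsum : ℓ' x = ∑ v ∈ t, c v * ℓ' v := by
          rw [hxeq, map_sum]; exact Finset.sum_congr rfl fun v _ => by rw [map_smul, smul_eq_mul]
        have hsumℓ : ℓ x = ∑ v ∈ t, c v * ℓ v := by
          rw [hxeq, map_sum]; exact Finset.sum_congr rfl fun v _ => by rw [map_smul, smul_eq_mul]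
        have hex : ∃ v ∈ t, 0 < c v * ℓ v := by
          by_contra hno
          push_neg at hno
          have : ℓ x ≤ 0 := by
            rw [hsumℓ]; exact Finset.sum_nonpos hno
          linarith
        obtain ⟨v₀, hv₀t, hv₀⟩ := hex
        have hc₀ : 0 < c v₀ := by
          rcases (hc v₀ hv₀t).lt_or_eq with h | h
          · exact h
          · exfalso; rw [← h, zero_mul] at hv₀; exact lt_irrefl 0 hv₀
        have hlv₀ : 0 < ℓ v₀ := by nlinarith
        have hterm : 0 < c v₀ * ℓ' v₀ := mul_pos hc₀ (by rw [happ]; exact hNbig v₀ (ht hv₀t) hlv₀)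
        have : 0 < ℓ' x := by
          rw [hsum]
          exact Finset.sum_pos' (fun v hv => mul_nonneg (hc v hv) (hgen v (ht hv))) ⟨v₀, hv₀t, hterm⟩
        linarith
      have hxF : x ∈ F := by rw [hFeq]; exact ⟨hxσ, hxℓ⟩
      have hxℓ₂ : ℓ₂ x = 0 := by
        have := happ x
        rw [hxℓ, mul_zero, add_zero] at this
        rw [← this, hxℓ']
      rw [hGeq]
      exact ⟨hxF, hxℓ₂⟩

lemma proper_face_dim_lt {F σ : Set (V n)} (h : IsFaceOf F σ) (hne : F ≠ σ) :
    coneDim F < coneDim σ := by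
  obtain ⟨ℓ, hℓ, hFeq⟩ := h
  by_contra hnot
  push_neg at hnot
  have hsub : F ⊆ σ := (IsFaceOf.subset ⟨ℓ, hℓ, hFeq⟩)
  have hle : Submodule.span ℚ F ≤ Submodule.span ℚ σ := Submodule.span_mono hsub
  have heq : Submodule.span ℚ F = Submodule.span ℚ σ :=
    Submodule.eq_of_le_of_finrank_le hle hnot
  have hker : Submodule.span ℚ F ≤ LinearMap.ker ℓ := by
    rw [Submodule.span_le]
    intro x hx
    rw [hFeq] at hx
    exact hx.2
  apply hne
  rw [hFeq]
  apply Set.Subset.antisymm (fun x hx => hx.1)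
  intro x hx
  refine ⟨hx, ?_⟩
  have : x ∈ Submodule.span ℚ σ := Submodule.subset_span hx
  rw [← heq] at this
  exact hker this

/-! ### rays -/

lemma span_singleton_eq_of_dim_one {μ : Set (V n)} (hdim : coneDim μ = 1)
    {v : V n} (hv : v ∈ μ) (hv0 : v ≠ 0) :
    Submodule.span ℚ μ = Submodule.span ℚ {v} := by
  have hle : Submodule.span ℚ ({v} : Set (V n)) ≤ Submodule.span ℚ μ :=
    Submodule.span_mono (by simpa using hv)
  refine (Submodule.eq_of_le_of_finrank_le hle ?_).symm
  rw [finrank_span_singleton hv0]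
  exact le_of_eq hdim

lemma mem_span_dim_one {μ : Set (V n)} (hdim : coneDim μ = 1)
    {v : V n} (hv : v ∈ μ) (hv0 : v ≠ 0) {y : V n} (hy : y ∈ μ) :
    ∃ c : ℚ, y = c • v := by
  have h1 : y ∈ Submodule.span ℚ μ := Submodule.subset_span hy
  rw [span_singleton_eq_of_dim_one hdim hv hv0] at h1
  obtain ⟨c, hc⟩ := Submodule.mem_span_singleton.mp h1
  exact ⟨c, hc.symm⟩

lemma exists_nonzero_of_dim_pos {μ : Set (V n)} (hdim : 0 < coneDim μ) :
    ∃ v ∈ μ, v ≠ 0 := by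
  by_contra h
  push_neg at h
  have : μ ⊆ {0} := fun x hx => by
    by_cases hx0 : x = 0
    · exact hx0
    · exact absurd hx0 (by simpa using h x hx)
  have hle : Submodule.span ℚ μ ≤ Submodule.span ℚ ({0} : Set (V n)) := Submodule.span_mono this
  rw [Submodule.span_zero_singleton] at hle
  have : coneDim μ = 0 := by
    unfold coneDim
    rw [le_bot_iff.mp hle]
    simp
  omega

/-- A strongly convex polyhedral cone of dimension one is a ray `ℚ≥0 • v`. -/
lemma ray_structure {ν : Set (V n)} (hpoly : IsPolyCone ν) (hsc : StronglyConvex ν)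
    (hdim : coneDim ν = 1) : ∃ v : V n, v ≠ 0 ∧ ν = rayset v := by
  obtain ⟨w, hw, hw0⟩ := exists_nonzero_of_dim_pos (by omega : 0 < coneDim ν)
  refine ⟨w, hw0, ?_⟩
  have hcs : IsConeSet ν := isConeSet_of_poly hpoly
  apply Set.Subset.antisymm
  · intro y hy
    obtain ⟨c, rfl⟩ := mem_span_dim_one hdim hw hw0 hy
    rcases le_or_gt 0 c with h | h
    · exact ⟨c, h, rfl⟩
    · exfalso
      have hneg : -(c • w) ∈ ν := by
        have : -(c • w) = (-c) • w := by rw [neg_smul]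
        rw [this]
        exact hcs.2.2 (-c) (by linarith) w hw
      have := hsc _ hy hneg
      rw [smul_eq_zero] at this
      rcases this with h' | h'
      · exact absurd h' (ne_of_lt h)
      · exact hw0 h'
  · rintro x ⟨c, hc, rfl⟩
    exact hcs.2.2 c hc w hw

/-! ### Minkowski: a strongly convex polyhedral cone is spanned by its rays -/

lemma strongly_convex_subset {σ τ' : Set (V n)} (h : StronglyConvex τ') (hsub : σ ⊆ τ') :
    StronglyConvex σ := fun x hx hnx => h x (hsub hx) (hsub hnx)

/-- Existence of a direction `u` in the span with `u ∉ σ` and `-u ∉ σ`. -/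
lemma exists_two_sided_exterior {S : Finset (V n)} {L : Finset ((V n) →ₗ[ℚ] ℚ)}
    (hL : coneHull (S : Set (V n)) = {x | ∀ ℓ ∈ L, 0 ≤ ℓ x})
    (hsc : StronglyConvex (coneHull (S : Set (V n))))
    {y z : V n} (hy : y ∈ coneHull (S : Set (V n))) (hz : z ∈ coneHull (S : Set (V n)))
    (hy0 : y ≠ 0) (hzy : z ∉ Submodule.span ℚ ({y} : Set (V n))) :
    ∃ u : V n, u ∈ Submodule.span ℚ (coneHull (S : Set (V n))) ∧
      u ∉ coneHull (S : Set (V n)) ∧ -u ∉ coneHull (S : Set (V n)) := by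
  classical
  set σ := coneHull (S : Set (V n)) with hσdef
  have hz0 : z ≠ 0 := by
    intro h; rw [h] at hzy; exact hzy (Submodule.zero_mem _)
  have hnz : -z ∉ σ := by
    intro h
    exact hz0 (hsc z hz (by simpa using h))
  have hmemiff : ∀ x : V n, x ∈ σ ↔ ∀ ℓ ∈ L, 0 ≤ ℓ x := fun x => Set.ext_iff.mp hL x
  have hqz : ¬ (∀ ℓ ∈ L, 0 ≤ ℓ (-z)) := by
    rw [← hmemiff]; exact hnz
  -- A = {K : y - K z ∈ σ} : apply max lemma with p = y, q = -z
  have hA0 : ∀ ℓ ∈ L, 0 ≤ ℓ (y + (0:ℚ) • (-z)) := by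
    intro ℓ hℓ
    simpa using (hmemiff y).mp hy ℓ hℓ
  obtain ⟨Ka, _, hKamem, hKaub, _⟩ := exists_max_param L y (-z) hqz 0 hA0
  -- B = {K : K z - y ∈ σ}
  by_cases hBne : ∃ K : ℚ, K • z - y ∈ σ
  · obtain ⟨K₁, hK₁⟩ := hBne
    -- B̃ = {t : -y + t • (-z) ∈ σ}, nonempty at t = -K₁
    have hB0 : ∀ ℓ ∈ L, 0 ≤ ℓ ((-y) + (-K₁) • (-z)) := by
      intro ℓ hℓ
      have : (-y) + (-K₁) • (-z) = K₁ • z - y := by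
        rw [neg_smul, smul_neg, neg_neg]; abel
      rw [this]
      exact (hmemiff _).mp hK₁ ℓ hℓ
    obtain ⟨tb, _, htbmem, htbub, _⟩ := exists_max_param L (-y) (-z) hqz (-K₁) hB0
    -- Kmin = -tb is a lower bound for B ; Ka is an upper bound for A
    have hdisj : Ka < -tb := by
      -- otherwise -tb ≤ Ka, and then Ka ∈ A ∩ B leads to contradiction... 
      -- show: if K ∈ A and K ∈ B then y = K z, contradiction.
      by_contra hcon
      push_neg at hcon  -- -tb ≤ Ka
      have hKaA : y - Ka • z ∈ σ := by
        rw [hmemiff]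
        intro ℓ hℓ
        have e : y - Ka • z = y + Ka • (-z) := by rw [smul_neg]; abel
        rw [e]; exact hKamem ℓ hℓ
      have hKminB : (-tb) • z - y ∈ σ := by
        rw [hmemiff]
        intro ℓ hℓ
        have e : (-tb) • z - y = (-y) + tb • (-z) := by rw [smul_neg, neg_smul]; abel
        rw [e]; exact htbmem ℓ hℓ
      have hcs : IsConeSet σ := isConeSet_coneHull _
      have hKaB : Ka • z - y ∈ σ := by
        have e : Ka • z - y = ((-tb) • z - y) + (Ka - (-tb)) • z := by
          rw [sub_smul]; abel
        rw [e]
        exact hcs.2.1 _ hKminB _ (hcs.2.2 _ (by linarith) z hz)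
      have h0 : y - Ka • z = 0 := hsc _ hKaA (by rw [neg_sub]; exact hKaB)
      have hyKa : y = Ka • z := sub_eq_zero.mp h0
      rcases eq_or_ne Ka 0 with h0' | h0'
      · apply hy0; rw [h0', zero_smul] at hyKa; exact hyKa
      · apply hzy
        have hz' : z = Ka⁻¹ • y := by
          rw [hyKa, smul_smul, inv_mul_cancel₀ h0', one_smul]
        rw [hz']
        exact Submodule.smul_mem _ _ (Submodule.mem_span_singleton_self y)
    set K := (Ka + (-tb)) / 2 with hK
    have h1 : Ka < K := by rw [hK]; linarith
    have h2 : K < -tb := by rw [hK]; linarith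
    refine ⟨y - K • z, ?_, ?_, ?_⟩
    · exact Submodule.sub_mem _ (Submodule.subset_span hy)
        (Submodule.smul_mem _ K (Submodule.subset_span hz))
    · intro hmem
      have : ∀ ℓ ∈ L, 0 ≤ ℓ (y + K • (-z)) := by
        intro ℓ hℓ
        have e : y + K • (-z) = y - K • z := by rw [smul_neg]; abel
        rw [e]
        exact (hmemiff _).mp hmem ℓ hℓ
      have := hKaub K this
      linarith
    · intro hmem
      have : ∀ ℓ ∈ L, 0 ≤ ℓ ((-y) + (-K) • (-z)) := by
        intro ℓ hℓ
        have e : (-y) + (-K) • (-z) = -(y - K • z) := by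
          rw [neg_smul, smul_neg, neg_neg]; abel
        rw [e]
        exact (hmemiff _).mp hmem ℓ hℓ
      have := htbub (-K) this
      linarith
  · -- B empty : take K = Ka + 1
    push_neg at hBne
    refine ⟨y - (Ka + 1) • z, ?_, ?_, ?_⟩
    · exact Submodule.sub_mem _ (Submodule.subset_span hy)
        (Submodule.smul_mem _ _ (Submodule.subset_span hz))
    · intro hmem
      have : ∀ ℓ ∈ L, 0 ≤ ℓ (y + (Ka + 1) • (-z)) := by
        intro ℓ hℓ
        have e : y + (Ka + 1) • (-z) = y - (Ka + 1) • z := by rw [smul_neg]; abel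
        rw [e]
        exact (hmemiff _).mp hmem ℓ hℓ
      have := hKaub (Ka + 1) this
      linarith
    · intro hmem
      apply hBne (Ka + 1)
      have e : (Ka + 1) • z - y = -(y - (Ka + 1) • z) := by abel
      rw [e]
      exact hmem

theorem minkowski_aux : ∀ (d : ℕ) (S : Finset (V n)),
    coneDim (coneHull (S : Set (V n))) ≤ d →
    StronglyConvex (coneHull (S : Set (V n))) →
    coneHull (S : Set (V n)) ⊆ coneHull (⋃₀ {r | IsRayOf r (coneHull (S : Set (V n)))}) := by
  intro d
  induction d with
  | zero =>
    intro S hd _ x hx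
    have hx0 : x = 0 := by
      have h1 : x ∈ Submodule.span ℚ (coneHull (S : Set (V n))) := Submodule.subset_span hx
      have h2 : Submodule.span ℚ (coneHull (S : Set (V n))) = ⊥ :=
        Submodule.finrank_eq_zero.mp (Nat.le_zero.mp hd)
      rw [h2] at h1
      simpa using h1
    rw [hx0]
    exact zero_mem_coneHull _
  | succ d ih =>
    intro S hd hsc x hx
    by_cases hx0 : x = 0
    · rw [hx0]; exact zero_mem_coneHull _
    set σ := coneHull (S : Set (V n)) with hσdef
    by_cases hdim1 : coneDim σ ≤ 1
    · -- dimension 0 or 1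
      rcases Nat.lt_or_ge (coneDim σ) 1 with h0 | h1
      · exfalso
        have h2 : Submodule.span ℚ σ = ⊥ :=
          Submodule.finrank_eq_zero.mp (Nat.lt_one_iff.mp h0)
        have := Submodule.subset_span (R := ℚ) hx
        rw [h2] at this
        exact hx0 (by simpa using this)
      · have hray : IsRayOf σ σ := ⟨isFaceOf_refl σ, le_antisymm hdim1 h1⟩
        apply subset_coneHull
        exact ⟨σ, hray, hx⟩
    push_neg at hdim1
    obtain ⟨L, hL⟩ := weyl S
    have hmemiff : ∀ w : V n, w ∈ σ ↔ ∀ ℓ ∈ L, 0 ≤ ℓ w := fun w => Set.ext_iff.mp hL w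
    -- find z ∈ S not in span {x}
    have hz : ∃ z ∈ (S : Set (V n)), z ∉ Submodule.span ℚ ({x} : Set (V n)) := by
      by_contra hno
      push_neg at hno
      have hsp : Submodule.span ℚ σ ≤ Submodule.span ℚ ({x} : Set (V n)) := by
        rw [hσdef, span_coneHull, Submodule.span_le]
        exact hno
      have := Submodule.finrank_mono hsp
      rw [finrank_span_singleton hx0] at this
      have h2 : coneDim σ ≤ 1 := this
      omega
    obtain ⟨z, hzS, hzx⟩ := hz
    obtain ⟨u, huspan, hu, hnu⟩ :=
      exists_two_sided_exterior hL hsc hx (subset_coneHull _ hzS) hx0 hzx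
    have hqu : ¬ (∀ ℓ ∈ L, 0 ≤ ℓ u) := by rw [← hmemiff]; exact hu
    have hqnu : ¬ (∀ ℓ ∈ L, 0 ≤ ℓ (-u)) := by rw [← hmemiff]; exact hnu
    have hx' : ∀ ℓ ∈ L, 0 ≤ ℓ (x + (0:ℚ) • u) := by
      intro ℓ hℓ; simpa using (hmemiff x).mp hx ℓ hℓ
    have hx'' : ∀ ℓ ∈ L, 0 ≤ ℓ (x + (0:ℚ) • (-u)) := by
      intro ℓ hℓ; simpa using (hmemiff x).mp hx ℓ hℓ
    obtain ⟨tp, htp0, htpmem, htpub, ℓp, hℓpL, hℓpu, hℓpz⟩ := exists_max_param L x u hqu 0 hx'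
    obtain ⟨tm, htm0, htmmem, htmub, ℓm, hℓmL, hℓmu, hℓmz⟩ :=
      exists_max_param L x (-u) hqnu 0 hx''
    -- the two boundary points and faces
    set xp := x + tp • u with hxp
    set xm := x + tm • (-u) with hxm
    have hxpσ : xp ∈ σ := (hmemiff xp).mpr htpmem
    have hxmσ : xm ∈ σ := (hmemiff xm).mpr htmmem
    have process : ∀ (ℓ₀ : (V n) →ₗ[ℚ] ℚ), ℓ₀ ∈ L → ∀ w₀ : V n, w₀ ∈ σ → ℓ₀ w₀ = 0 →
        ℓ₀ u ≠ 0 → w₀ ∈ coneHull (⋃₀ {r | IsRayOf r σ}) := by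
      intro ℓ₀ hℓ₀L w₀ hw₀σ hw₀0 hℓ₀u
      set F := {w ∈ σ | ℓ₀ w = 0} with hF
      have hface : IsFaceOf F σ := ⟨ℓ₀, fun w hw => (hmemiff w).mp hw ℓ₀ hℓ₀L, rfl⟩
      have hproper : F ≠ σ := by
        intro hFeq
        apply hℓ₀u
        have hker : Submodule.span ℚ σ ≤ LinearMap.ker ℓ₀ := by
          rw [Submodule.span_le]
          intro w hw
          have : w ∈ F := by rw [hFeq]; exact hw
          exact this.2
        exact hker huspan
      have hdimF : coneDim F ≤ d :=
        Nat.lt_succ_iff.mp (lt_of_lt_of_le (proper_face_dim_lt hface hproper) hd)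
      obtain ⟨SF, _, hSFeq⟩ := face_generators (hσdef ▸ hface)
      have hFsc : StronglyConvex F := strongly_convex_subset hsc (IsFaceOf.subset hface)
      have hsub := ih SF (by rw [← hSFeq]; exact hdimF) (by rw [← hSFeq]; exact hFsc)
      have hw₀F : w₀ ∈ F := ⟨hw₀σ, hw₀0⟩
      have hw₀' : w₀ ∈ coneHull (⋃₀ {r | IsRayOf r F}) := by
        have := hsub (by rw [← hSFeq]; exact hw₀F)
        rw [← hSFeq] at this
        exact this
      refine coneHull_mono ?_ hw₀'
      intro w hw
      obtain ⟨r, hr, hwr⟩ := hw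
      exact ⟨r, ⟨isFaceOf_trans (hσdef ▸ hface) hr.1, hr.2⟩, hwr⟩
    have hxpmem : xp ∈ coneHull (⋃₀ {r | IsRayOf r σ}) :=
      process ℓp hℓpL xp hxpσ hℓpz (ne_of_lt hℓpu)
    have hxmmem : xm ∈ coneHull (⋃₀ {r | IsRayOf r σ}) := by
      apply process ℓm hℓmL xm hxmσ hℓmz
      intro h
      rw [map_neg] at hℓmu
      rw [h] at hℓmu
      -- hℓmu : ℓm (-u) < 0, h : ℓm u = 0
      simp at hℓmu
    by_cases hts : tp + tm = 0
    · have htp' : tp = 0 := by linarith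
      have : x = xp := by rw [hxp, htp', zero_smul, add_zero]
      rw [this]; exact hxpmem
    · have hspos : 0 < tp + tm := by
        rcases lt_or_eq_of_le (by linarith : (0:ℚ) ≤ tp + tm) with h | h
        · exact h
        · exact absurd h.symm hts
      have hxeq : x = (tm / (tp + tm)) • xp + (tp / (tp + tm)) • xm := by
        rw [hxp, hxm]
        have hne : tp + tm ≠ 0 := ne_of_gt hspos
        field_simp
        match_scalars <;> field_simp <;> ring
      rw [hxeq]
      have hcs : IsConeSet (coneHull (⋃₀ {r | IsRayOf r σ})) := isConeSet_coneHull _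
      exact hcs.2.1 _ (hcs.2.2 _ (div_nonneg htm0 (le_of_lt hspos)) _ hxpmem)
        _ (hcs.2.2 _ (div_nonneg htp0 (le_of_lt hspos)) _ hxmmem)

/-! ### the functional cutting out `τ` -/

lemma exists_m {A : Set (V n)} {v : V n} (hv : v ∉ Submodule.span ℚ A) :
    ∃ m : (V n) →ₗ[ℚ] ℚ, (∀ x ∈ Submodule.span ℚ A, m x = 0) ∧ m v = 1 := by
  set p := Submodule.span ℚ A with hp
  have hq : p.mkQ v ≠ 0 := by
    rw [Submodule.mkQ_apply, Ne, Submodule.Quotient.mk_eq_zero]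
    exact hv
  have hf : ∃ f : Module.Dual ℚ (V n ⧸ p), f (p.mkQ v) ≠ 0 := by
    by_contra hc; push_neg at hc
    exact hq ((Module.forall_dual_apply_eq_zero_iff ℚ _).mp hc)
  obtain ⟨f, hf⟩ := hf
  refine ⟨(f (p.mkQ v))⁻¹ • (f.comp p.mkQ), ?_, ?_⟩
  · intro x hx
    have hx0 : p.mkQ x = 0 := by
      rw [Submodule.mkQ_apply, Submodule.Quotient.mk_eq_zero]
      exact hx
    simp [LinearMap.comp_apply, hx0]
  · simp only [LinearMap.smul_apply, LinearMap.comp_apply, smul_eq_mul]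
    exact inv_mul_cancel₀ hf

/-! ### the geometric setting of Statement 8 -/

structure Setting (n : ℕ) where
  τ : Set (V n)
  ν : Set (V n)
  v : V n
  m : (V n) →ₗ[ℚ] ℚ
  X' : Set (Set (V n))
  hτpoly : IsPolyCone τ
  hνv : ν = rayset v
  hv0 : v ≠ 0
  hm0 : ∀ x ∈ Submodule.span ℚ τ, m x = 0
  hmv : m v = 1
  hfan : IsFan X'
  hsupX : support X' = support (Ext τ ν)
  hsubd : ∀ σ' ∈ X', ∃ σ ∈ Ext τ ν, σ' ⊆ σ
  heff : raysIn X' = raysIn (Ext τ ν)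
  hdim : coneDim (coneHull (τ ∪ ν)) = coneDim τ + 1

namespace Setting

variable (s : Setting n)

lemma hτcs : IsConeSet s.τ := isConeSet_of_poly s.hτpoly

lemma hνcs : IsConeSet s.ν := by rw [s.hνv]; exact isConeSet_rayset _

lemma hmτ : ∀ x ∈ s.τ, s.m x = 0 := fun x hx => s.hm0 x (Submodule.subset_span hx)

lemma hνdim : coneDim s.ν = 1 := by
  rw [s.hνv]
  unfold coneDim
  have h1 : Submodule.span ℚ (rayset s.v) = Submodule.span ℚ ({s.v} : Set (V n)) := by
    apply le_antisymm
    · rw [Submodule.span_le]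
      rintro x ⟨c, _, rfl⟩
      exact Submodule.smul_mem _ c (Submodule.mem_span_singleton_self _)
    · exact Submodule.span_mono (by simpa using mem_rayset_self s.v)
  rw [h1, finrank_span_singleton s.hv0]

lemma hPdecomp : coneHull (s.τ ∪ s.ν) = {z | ∃ y ∈ s.τ, ∃ w ∈ s.ν, z = y + w} := by
  rw [coneHull_union, coneHull_eq_self s.hτcs, coneHull_eq_self s.hνcs]

lemma hmP : ∀ x ∈ coneHull (s.τ ∪ s.ν), 0 ≤ s.m x := by
  intro x hx
  rw [s.hPdecomp] at hx
  obtain ⟨y, hy, w, hw, rfl⟩ := hx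
  rw [s.hνv] at hw
  obtain ⟨c, hc, rfl⟩ := hw
  rw [map_add, map_smul, smul_eq_mul, s.hmv, s.hmτ y hy]
  linarith

lemma hPker : ∀ x ∈ coneHull (s.τ ∪ s.ν), s.m x = 0 → x ∈ s.τ := by
  intro x hx hm
  rw [s.hPdecomp] at hx
  obtain ⟨y, hy, w, hw, rfl⟩ := hx
  rw [s.hνv] at hw
  obtain ⟨c, hc, rfl⟩ := hw
  rw [map_add, map_smul, smul_eq_mul, s.hmv, s.hmτ y hy, zero_add, mul_one] at hm
  rw [hm, zero_smul, add_zero]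
  exact hy

lemma hextS : extS s.τ s.ν = {s.τ} := by
  unfold extS
  rw [if_pos s.hdim]

lemma hextFaces : extFaces s.τ s.ν = faces s.τ := by
  unfold extFaces
  rw [s.hextS]
  ext ξ
  simp [faces]

lemma hExt : Ext s.τ s.ν =
    {s.ν} ∪ faces s.τ ∪ (fun ξ => coneHull (ξ ∪ s.ν)) '' faces s.τ := by
  unfold Ext
  rw [s.hextFaces]

lemma hτfaces : s.τ ∈ faces s.τ := isFaceOf_refl s.τ

lemma hfacesub : ∀ F ∈ faces s.τ, F ⊆ s.τ := fun F hF => IsFaceOf.subset hF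

lemma hExtP : ∀ σ ∈ Ext s.τ s.ν, σ ⊆ coneHull (s.τ ∪ s.ν) := by
  intro σ hσ
  rw [s.hExt] at hσ
  rcases hσ with (h | h) | ⟨ξ, hξ, rfl⟩
  · rw [Set.mem_singleton_iff.mp h]
    exact fun x hx => subset_coneHull _ (Or.inr hx)
  · exact (s.hfacesub σ h).trans ((Set.subset_union_left).trans (subset_coneHull _))
  · exact coneHull_mono (Set.union_subset_union_left _ (s.hfacesub ξ hξ))

lemma hPmem : coneHull (s.τ ∪ s.ν) ∈ Ext s.τ s.ν := by
  rw [s.hExt]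
  exact Or.inr ⟨s.τ, s.hτfaces, rfl⟩

lemma hsupExt : support (Ext s.τ s.ν) = coneHull (s.τ ∪ s.ν) := by
  apply Set.Subset.antisymm
  · rintro x ⟨σ, hσ, hx⟩
    exact s.hExtP σ hσ hx
  · intro x hx
    exact ⟨_, s.hPmem, hx⟩

lemma hνExt : s.ν ∈ Ext s.τ s.ν := by
  rw [s.hExt]
  exact Or.inl (Or.inl rfl)

lemma hvspan : s.v ∉ Submodule.span ℚ s.τ := by
  intro hv
  have h2 : Submodule.span ℚ s.ν ≤ Submodule.span ℚ s.τ := by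
    rw [Submodule.span_le, s.hνv]
    rintro x ⟨c, _, rfl⟩
    exact Submodule.smul_mem _ c hv
  have h1 : Submodule.span ℚ (coneHull (s.τ ∪ s.ν)) = Submodule.span ℚ s.τ := by
    rw [span_coneHull, Submodule.span_union, sup_eq_left.mpr h2]
  have h3 : coneDim (coneHull (s.τ ∪ s.ν)) = coneDim s.τ := by
    unfold coneDim; rw [h1]
  have := s.hdim
  omega

/-- classification of one-dimensional cones of `Ext`. -/
lemma hray_class : ∀ μ ∈ Ext s.τ s.ν, coneDim μ = 1 → μ = s.ν ∨ IsFaceOf μ s.τ := by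
  intro μ hμ hμdim
  rw [s.hExt] at hμ
  rcases hμ with (h | h) | ⟨ξ, hξ, rfl⟩
  · exact Or.inl (Set.mem_singleton_iff.mp h)
  · exact Or.inr h
  · left
    have hvμ : s.v ∈ coneHull (ξ ∪ s.ν) :=
      subset_coneHull _ (Or.inr (s.hνv ▸ mem_rayset_self s.v))
    have hξ0 : ξ ⊆ {0} := by
      intro y hy
      have hyμ : y ∈ coneHull (ξ ∪ s.ν) := subset_coneHull _ (Or.inl hy)
      obtain ⟨c, hc⟩ := mem_span_dim_one hμdim hvμ s.hv0 hyμ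
      have hyτ : y ∈ s.τ := s.hfacesub ξ hξ hy
      have : s.m y = 0 := s.hmτ y hyτ
      rw [hc, map_smul, smul_eq_mul, s.hmv, mul_one] at this
      rw [hc, this, zero_smul]
      rfl
    apply Set.Subset.antisymm
    · apply coneHull_min
      · intro x hx
        rcases hx with h | h
        · have := hξ0 h
          rw [Set.mem_singleton_iff.mp this]
          exact s.hνcs.1
        · exact h
      · exact s.hνcs
    · exact (subset_coneHull _).trans (coneHull_mono Set.subset_union_right)
      |>.trans (le_of_eq rfl)

lemma hνX' : s.ν ∈ s.X' := by
  have : s.ν ∈ raysIn (Ext s.τ s.ν) := ⟨s.hνExt, s.hνdim⟩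
  rw [← s.heff] at this
  exact this.1

lemma hXP : ∀ σ' ∈ s.X', σ' ⊆ coneHull (s.τ ∪ s.ν) := by
  intro σ' hσ'
  obtain ⟨σ, hσ, hsub⟩ := s.hsubd σ' hσ'
  exact hsub.trans (s.hExtP σ hσ)

/-- Master structure claim for cones of the efficient subdivision. -/
lemma master : ∀ σ' ∈ s.X',
    (∀ x ∈ σ', x - s.m x • s.v ∈ σ' ∧ s.m (x - s.m x • s.v) = 0) ∧
    ((∃ x₀ ∈ σ', 0 < s.m x₀) → s.ν ⊆ σ') := by
  intro σ' hσ'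
  obtain ⟨hpoly, hsc⟩ := s.hfan.2.1 σ' hσ'
  obtain ⟨S', hS'⟩ := hpoly
  have hmink := minkowski_aux (coneDim (coneHull (S' : Set (V n)))) S' le_rfl
    (hS' ▸ hsc)
  rw [← hS'] at hmink
  -- classification of rays of σ'
  have hrays : ∀ r, IsRayOf r σ' → r = s.ν ∨ r ⊆ s.τ := by
    intro r hr
    have hrX' : r ∈ s.X' := s.hfan.2.2.1 σ' hσ' r hr.1
    have : r ∈ raysIn s.X' := ⟨hrX', hr.2⟩
    rw [s.heff] at this
    rcases s.hray_class r this.1 this.2 with h | h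
    · exact Or.inl h
    · exact Or.inr (IsFaceOf.subset h)
  have hcsσ' : IsConeSet σ' := hS' ▸ isConeSet_coneHull _
  set D := σ' ∩ {w | s.m w = 0} with hD
  have hDcs : IsConeSet D := isConeSet_inter hcsσ' (isConeSet_ker s.m)
  have hUsub : ⋃₀ {r | IsRayOf r σ'} ⊆ D ∪ s.ν := by
    rintro x ⟨r, hr, hx⟩
    rcases hrays r hr with h | h
    · exact Or.inr (h ▸ hx)
    · refine Or.inl ⟨IsFaceOf.subset hr.1 hx, ?_⟩
      exact s.hmτ x (h hx)
  have hdecomp : ∀ x ∈ σ', ∃ y ∈ D, ∃ c : ℚ, 0 ≤ c ∧ x = y + c • s.v := by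
    intro x hx
    have h1 : x ∈ coneHull (D ∪ s.ν) := coneHull_mono hUsub (hmink (hS' ▸ hx))
    rw [coneHull_union, coneHull_eq_self hDcs, coneHull_eq_self s.hνcs] at h1
    obtain ⟨y, hy, w, hw, rfl⟩ := h1
    rw [s.hνv] at hw
    obtain ⟨c, hc, rfl⟩ := hw
    exact ⟨y, hy, c, hc, rfl⟩
  constructor
  · intro x hx
    obtain ⟨y, hy, c, hc, rfl⟩ := hdecomp x hx
    have hm1 : s.m (y + c • s.v) = c := by
      rw [map_add, map_smul, smul_eq_mul, s.hmv, hy.2]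
      ring
    have he : y + c • s.v - s.m (y + c • s.v) • s.v = y := by
      rw [hm1]; abel
    rw [he]
    exact ⟨hy.1, hy.2⟩
  · rintro ⟨x₀, hx₀, hm₀⟩
    by_cases hνr : IsRayOf s.ν σ'
    · exact IsFaceOf.subset hνr.1
    · exfalso
      have hUD : ⋃₀ {r | IsRayOf r σ'} ⊆ {w | s.m w = 0} := by
        rintro x ⟨r, hr, hx⟩
        rcases hrays r hr with h | h
        · exact absurd (h ▸ hr) hνr
        · exact s.hmτ x (h hx)
      have : σ' ⊆ {w | s.m w = 0} := by
        intro x hx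
        exact coneHull_min hUD (isConeSet_ker s.m) (hmink (hS' ▸ hx))
      have := this hx₀
      rw [Set.mem_setOf_eq] at this
      linarith

lemma hkerface : ∀ σ' ∈ s.X', σ' ∩ {w | s.m w = 0} ∈ s.X' ∧ σ' ∩ {w | s.m w = 0} ⊆ s.τ := by
  intro σ' hσ'
  constructor
  · apply s.hfan.2.2.1 σ' hσ'
    exact ⟨s.m, fun x hx => s.hmP x (s.hXP σ' hσ' hx), rfl⟩
  · rintro x ⟨hx1, hx2⟩
    exact s.hPker x (s.hXP σ' hσ' hx1) hx2

/-- Every subdivision cone inside `τ` gives a pyramid cone of the subdivision. -/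
lemma pyramid : ∀ ξ ∈ s.X', ξ ⊆ s.τ → coneHull (ξ ∪ s.ν) ∈ s.X' := by
  intro ξ hξ hξτ
  obtain ⟨Sξ, hSξ⟩ := (s.hfan.2.1 ξ hξ).1
  set xbar := ∑ t ∈ Sξ, t with hxbar
  have hxbarξ : xbar ∈ ξ := by
    rw [hSξ]
    exact ⟨Sξ, le_refl _, fun _ => 1, fun _ _ => zero_le_one, by simp [hxbar]⟩
  have hrel : ∀ F, IsFaceOf F ξ → xbar ∈ F → ξ ⊆ F := by
    rintro F ⟨ℓ, hℓ, rfl⟩ hxF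
    have hgen0 : ∀ t ∈ Sξ, ℓ t = 0 := by
      have hsum : ∑ t ∈ Sξ, ℓ t = 0 := by
        rw [← map_sum]
        exact hxF.2
      intro t ht
      exact (Finset.sum_eq_zero_iff_of_nonneg
        (fun t' ht' => hℓ t' (hSξ ▸ subset_coneHull _ ht'))).mp hsum t ht
    have hFcs : IsConeSet {x ∈ ξ | ℓ x = 0} :=
      IsFaceOf.coneSet ⟨ℓ, hℓ, rfl⟩ (isConeSet_of_poly ⟨Sξ, hSξ⟩)
    intro x hx
    rw [hSξ] at hx
    refine coneHull_min ?_ hFcs hx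
    intro t ht
    exact ⟨hSξ ▸ subset_coneHull _ ht, hgen0 t ht⟩
  -- the point xbar + v lies in some subdivision cone
  have hzP : xbar + s.v ∈ coneHull (s.τ ∪ s.ν) := by
    rw [s.hPdecomp]
    exact ⟨xbar, hξτ hxbarξ, s.v, s.hνv ▸ mem_rayset_self s.v, rfl⟩
  have hzsup : xbar + s.v ∈ support s.X' := by
    rw [s.hsupX, s.hsupExt]
    exact hzP
  obtain ⟨σ', hσ', hzσ'⟩ := hzsup
  have hmz : s.m (xbar + s.v) = 1 := by
    rw [map_add, s.hmv, s.hmτ xbar (hξτ hxbarξ)]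
    ring
  obtain ⟨hvert, hνsub⟩ := s.master σ' hσ'
  have hνσ' : s.ν ⊆ σ' := hνsub ⟨xbar + s.v, hzσ', by rw [hmz]; norm_num⟩
  have hxbarker : xbar ∈ σ' ∩ {w | s.m w = 0} := by
    have := hvert (xbar + s.v) hzσ'
    rw [hmz, one_smul] at this
    have he : xbar + s.v - s.v = xbar := by abel
    rw [he] at this
    exact ⟨this.1, this.2⟩
  set ξ'' := σ' ∩ {w | s.m w = 0} with hξ''
  obtain ⟨hξ''X, hξ''τ⟩ := s.hkerface σ' hσ'
  -- ξ is a face of ξ''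
  have hint := s.hfan.2.2.2 ξ hξ ξ'' hξ''X
  have hsub2 : ξ ⊆ ξ'' := by
    have h1 : ξ ⊆ ξ ∩ ξ'' := hrel (ξ ∩ ξ'') hint.1 ⟨hxbarξ, hxbarker⟩
    exact h1.trans Set.inter_subset_right
  have hface : IsFaceOf ξ ξ'' := by
    have : ξ ∩ ξ'' = ξ := Set.Subset.antisymm Set.inter_subset_left
      (Set.subset_inter (le_refl ξ) hsub2)
    rw [← this]
    exact hint.2
  obtain ⟨ℓ', hℓ'pos, hξeq⟩ := hface
  set ℓ'' := ℓ' - (ℓ' s.v) • s.m with hℓ''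
  have happ : ∀ w, ℓ'' w = ℓ' w - ℓ' s.v * s.m w := by
    intro w; rw [hℓ'']; simp [smul_eq_mul]
  have hvertξ'' : ∀ w ∈ σ', w - s.m w • s.v ∈ ξ'' := by
    intro w hw
    exact ⟨(hvert w hw).1, (hvert w hw).2⟩
  have hℓ''y : ∀ w ∈ σ', ℓ'' w = ℓ' (w - s.m w • s.v) := by
    intro w hw
    rw [happ, map_sub, map_smul, smul_eq_mul]
    ring
  have hm_nonneg : ∀ w ∈ σ', 0 ≤ s.m w := fun w hw => s.hmP w (s.hXP σ' hσ' hw)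
  refine s.hfan.2.2.1 σ' hσ' (coneHull (ξ ∪ s.ν)) ⟨ℓ'', ?_, ?_⟩
  · intro w hw
    rw [hℓ''y w hw]
    exact hℓ'pos _ (hvertξ'' w hw)
  · have hξcs : IsConeSet ξ := isConeSet_of_poly ⟨Sξ, hSξ⟩
    have hcsσ' : IsConeSet σ' := isConeSet_of_poly (s.hfan.2.1 σ' hσ').1
    have hset : coneHull (ξ ∪ s.ν) = {z | ∃ y ∈ ξ, ∃ w ∈ s.ν, z = y + w} := by
      rw [coneHull_union, coneHull_eq_self hξcs, coneHull_eq_self s.hνcs]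
    rw [hset]
    ext zz
    constructor
    · rintro ⟨y, hy, w, hw, rfl⟩
      rw [s.hνv] at hw
      obtain ⟨c, hc, rfl⟩ := hw
      have hyξ'' : y ∈ ξ'' := hsub2 hy
      have hzzσ' : y + c • s.v ∈ σ' :=
        hcsσ'.2.1 y hyξ''.1 _ (hνσ' (s.hνv ▸ ⟨c, hc, rfl⟩))
      refine ⟨hzzσ', ?_⟩
      have hℓ'y : ℓ' y = 0 := by
        have : y ∈ {w ∈ ξ'' | ℓ' w = 0} := by rw [← hξeq]; exact hy
        exact this.2
      have hmy : s.m y = 0 := hyξ''.2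
      rw [happ, map_add, map_add, map_smul, map_smul, smul_eq_mul, smul_eq_mul,
        s.hmv, hℓ'y, hmy]
      ring
    · rintro ⟨hzσ'', hz0⟩
      have hyξ'' := hvertξ'' zz hzσ''
      have hℓ'y : ℓ' (zz - s.m zz • s.v) = 0 := by
        rw [← hℓ''y zz hzσ'']
        exact hz0
      have hyξ : zz - s.m zz • s.v ∈ ξ := by
        rw [hξeq]
        exact ⟨hyξ'', hℓ'y⟩
      refine ⟨zz - s.m zz • s.v, hyξ, s.m zz • s.v, ?_, by abel⟩
      rw [s.hνv]
      exact ⟨s.m zz, hm_nonneg zz hzσ'', rfl⟩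

end Setting

end Aux

/-- When `dim Cone(τ, ν) = dim τ + 1`, every efficient subdivision of
`Ext(𝔗, ν)` is of the form `Ext(𝔗', ν)` for an efficient subdivision `𝔗'` of `𝔗`. -/
theorem efficient_subdivision_of_ext_is_ext {n : ℕ} (τ ν : Set (V n))
    (hτ : IsPolyCone τ) (hsc : StronglyConvex τ)
    (hν : IsRay ν) (hns : ¬ ν ⊆ τ) (hsc' : StronglyConvex (coneHull (τ ∪ ν)))
    (hdim : coneDim (coneHull (τ ∪ ν)) = coneDim τ + 1)
    (X' : Set (Set (V n)))
    (hsub : IsSubdivision X' (Ext τ ν)) (heff : IsEfficient X' (Ext τ ν)) :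
    ∃ T' : Set (Set (V n)), IsSubdivision T' (faces τ) ∧ IsEfficient T' (faces τ) ∧
      X' = ExtSub T' τ ν := by
  classical
  obtain ⟨v, hv0, hνv⟩ := ray_structure hν.1 hν.2.1 hν.2.2
  have hvsp : v ∉ Submodule.span ℚ τ := by
    intro hv
    have h2 : Submodule.span ℚ ν ≤ Submodule.span ℚ τ := by
      rw [Submodule.span_le, hνv]
      rintro x ⟨c, _, rfl⟩
      exact Submodule.smul_mem _ c hv
    have h1 : Submodule.span ℚ (coneHull (τ ∪ ν)) = Submodule.span ℚ τ := by
      rw [span_coneHull, Submodule.span_union, sup_eq_left.mpr h2]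
    have h3 : coneDim (coneHull (τ ∪ ν)) = coneDim τ := by
      unfold coneDim; rw [h1]
    omega
  obtain ⟨m, hm0, hmv⟩ := exists_m hvsp
  set s : Setting n :=
    ⟨τ, ν, v, m, X', hτ, hνv, hv0, hm0, hmv, hsub.1, hsub.2.1, hsub.2.2, heff, hdim⟩ with hs
  set T' : Set (Set (V n)) := {σ' | σ' ∈ X' ∧ σ' ⊆ τ} with hT'
  have hτP : τ ⊆ coneHull (τ ∪ ν) :=
    (Set.subset_union_left).trans (subset_coneHull _)
  have hmemT' : ∀ σ', σ' ∈ T' ↔ σ' ∈ X' ∧ σ' ⊆ τ := fun σ' => Iff.rfl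
  refine ⟨T', ⟨?_, ?_, ?_⟩, ?_, ?_⟩
  · -- IsFan T'
    refine ⟨hsub.1.1.subset (fun x hx => hx.1), ?_, ?_, ?_⟩
    · exact fun σ' hσ' => hsub.1.2.1 σ' hσ'.1
    · exact fun σ' hσ' F hF =>
        ⟨hsub.1.2.2.1 σ' hσ'.1 F hF, (IsFaceOf.subset hF).trans hσ'.2⟩
    · exact fun a ha b hb => hsub.1.2.2.2 a ha.1 b hb.1
  · -- support T' = support (faces τ)
    have hsf : support (faces τ) = τ := by
      apply Set.Subset.antisymm
      · rintro x ⟨F, hF, hx⟩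
        exact IsFaceOf.subset hF hx
      · intro x hx
        exact ⟨τ, isFaceOf_refl τ, hx⟩
    rw [hsf]
    apply Set.Subset.antisymm
    · rintro x ⟨σ', hσ', hx⟩
      exact hσ'.2 hx
    · intro x hx
      have hxsup : x ∈ support X' := by
        rw [hsub.2.1, s.hsupExt]
        exact hτP hx
      obtain ⟨σ', hσ', hxσ'⟩ := hxsup
      obtain ⟨hξ''X, hξ''τ⟩ := s.hkerface σ' hσ'
      refine ⟨σ' ∩ {w | m w = 0}, ⟨hξ''X, hξ''τ⟩, ⟨hxσ', ?_⟩⟩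
      exact s.hmτ x hx
  · -- every cone of T' inside a face of τ
    intro σ' hσ'
    exact ⟨τ, isFaceOf_refl τ, hσ'.2⟩
  · -- efficiency
    ext r
    constructor
    · rintro ⟨⟨hrX, hrτ⟩, hr1⟩
      have : r ∈ raysIn (Ext τ ν) := by
        rw [← heff]
        exact ⟨hrX, hr1⟩
      rcases s.hray_class r this.1 this.2 with h | h
      · exfalso
        apply hns
        have : s.ν ⊆ τ := h ▸ hrτ
        exact this
      · exact ⟨h, hr1⟩
    · rintro ⟨hrf, hr1⟩
      have hrExt : r ∈ Ext τ ν := by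
        rw [s.hExt]
        exact Or.inl (Or.inr hrf)
      have : r ∈ raysIn X' := by
        rw [heff]
        exact ⟨hrExt, hr1⟩
      exact ⟨⟨this.1, IsFaceOf.subset hrf⟩, hr1⟩
  · -- X' = ExtSub T' τ ν
    have hextSmem : τ ∈ extS τ ν := by
      rw [s.hextS]
      rfl
    unfold ExtSub
    ext σ'
    constructor
    · intro hσ'
      by_cases hker : ∀ x ∈ σ', m x = 0
      · refine Or.inl (Or.inr ⟨hσ', ?_⟩)
        intro x hx
        exact s.hPker x (s.hXP σ' hσ' hx) (hker x hx)
      · push_neg at hker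
        obtain ⟨x₀, hx₀, hm₀ne⟩ := hker
        have hm₀ : 0 < m x₀ :=
          lt_of_le_of_ne (s.hmP x₀ (s.hXP σ' hσ' hx₀)) (Ne.symm hm₀ne)
        obtain ⟨hvert, hνsub⟩ := s.master σ' hσ'
        have hνσ' : ν ⊆ σ' := hνsub ⟨x₀, hx₀, hm₀⟩
        obtain ⟨hξ''X, hξ''τ⟩ := s.hkerface σ' hσ'
        have hξ''cs : IsConeSet (σ' ∩ {w | m w = 0}) :=
          isConeSet_inter (isConeSet_of_poly (hsub.1.2.1 σ' hσ').1) (isConeSet_ker m)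
        have hσ'cs : IsConeSet σ' := isConeSet_of_poly (hsub.1.2.1 σ' hσ').1
        have hσ'eq : coneHull ((σ' ∩ {w | m w = 0}) ∪ ν) = σ' := by
          rw [coneHull_union, coneHull_eq_self hξ''cs, coneHull_eq_self s.hνcs]
          apply Set.Subset.antisymm
          · rintro z ⟨y, hy, w, hw, rfl⟩
            exact hσ'cs.2.1 y hy.1 w (hνσ' hw)
          · intro x hx
            refine ⟨x - m x • v, hvert x hx, m x • v, ?_, by abel⟩
            rw [s.hνv]
            exact ⟨m x, s.hmP x (s.hXP σ' hσ' hx), rfl⟩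
        refine Or.inr ⟨σ' ∩ {w | m w = 0},
          ⟨σ' ∩ {w | m w = 0}, ⟨hξ''X, hξ''τ⟩, ⟨⟨τ, hextSmem, hξ''τ⟩, isFaceOf_refl _⟩⟩, hσ'eq⟩
    · rintro ((h | hT) | ⟨ξ, ⟨ζ', hζ'T', ⟨_, hfaceξ⟩⟩, rfl⟩)
      · rw [Set.mem_singleton_iff.mp h]
        exact s.hνX'
      · exact hT.1
      · have hξX' : ξ ∈ X' := hsub.1.2.2.1 ζ' hζ'T'.1 ξ hfaceξ
        have hξτ : ξ ⊆ τ := (IsFaceOf.subset hfaceξ).trans hζ'T'.2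
        exact s.pyramid ξ hξX' hξτ


end ToricPaper
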